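/- Let B ∈ ℝ^{m×p}, C ∈ ℝ^{n×p} with m ≥ n, set A := B Cᵀ ∈ ℝ^{m×n}, and let A = W H be a polar decomposition of A (W ∈ V(n,m) orthonormal, H symmetric positive semidefinite). Then for every orthonormal matrix Q ∈ V(n,m), ‖B − Q C‖_F² − ‖B − W C‖_F² = ‖W √H − Q √H‖_F². -/

import Mathlib

open Matrix
/-- The square root of a positive semidefinite matrix, as `Matrix.PosSemidef.sqrt` was defined in
the older Mathlib (it has since been removed). -/
noncomputable def Matrix.PosSemidef.sqrt {n : Type*} [Fintype n] [DecidableEq n]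
    {A : Matrix n n ℝ} (hA : A.PosSemidef) : Matrix n n ℝ :=
  hA.1.eigenvectorUnitary.1 * diagonal ((↑) ∘ (√·) ∘ hA.1.eigenvalues) *
    (star hA.1.eigenvectorUnitary : Matrix n n ℝ)

private lemma psd_sqrt_mul_self {n : Type*} [Fintype n] [DecidableEq n]
    {A : Matrix n n ℝ} (hA : A.PosSemidef) : hA.sqrt * hA.sqrt = A := by
  have hU : (star hA.1.eigenvectorUnitary : Matrix n n ℝ) * hA.1.eigenvectorUnitary.1 = 1 :=
    Unitary.star_mul_self_of_mem hA.1.eigenvectorUnitary.2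
  conv_rhs => rw [hA.1.spectral_theorem, Unitary.conjStarAlgAut_apply]
  unfold Matrix.PosSemidef.sqrt
  simp only [Matrix.mul_assoc]
  congr 1
  rw [← Matrix.mul_assoc _ hA.1.eigenvectorUnitary.1, hU, Matrix.one_mul, ← Matrix.mul_assoc,
    diagonal_mul_diagonal]
  congr 2
  funext i
  simp [Real.mul_self_sqrt (hA.eigenvalues_nonneg i)]

private lemma psd_sqrt_transpose {n : Type*} [Fintype n] [DecidableEq n]
    {A : Matrix n n ℝ} (hA : A.PosSemidef) : hA.sqrtᵀ = hA.sqrt := by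
  have h : hA.sqrtᴴ = hA.sqrt := by
    unfold Matrix.PosSemidef.sqrt
    simp only [Matrix.conjTranspose_mul, Unitary.coe_star, Matrix.star_eq_conjTranspose,
      conjTranspose_conjTranspose, diagonal_conjTranspose, star_trivial, Matrix.mul_assoc]
  rwa [conjTranspose_eq_transpose_of_trivial] at h

private lemma frob_trace {a b : ℕ} (M : Matrix (Fin a) (Fin b) ℝ) :
    ∑ i, ∑ j, (M i j) ^ 2 = Matrix.trace (Mᵀ * M) := by
  rw [Finset.sum_comm]
  simp [Matrix.trace, Matrix.mul_apply, Matrix.diag, sq]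

/-- Error reformulation for polar decomposition:
`‖B − QC‖_F² − ‖B − WC‖_F² = ‖W√H − Q√H‖_F²` for any orthonormal `Q`. -/
theorem stmt0 {m n p : ℕ} (hmn : n ≤ m)
    (B : Matrix (Fin m) (Fin p) ℝ) (C : Matrix (Fin n) (Fin p) ℝ)
    (W : Matrix (Fin m) (Fin n) ℝ) (H : Matrix (Fin n) (Fin n) ℝ)
    (hW : Wᵀ * W = 1) (hH : H.PosSemidef) (hpolar : B * Cᵀ = W * H)
    (Q : Matrix (Fin m) (Fin n) ℝ) (hQ : Qᵀ * Q = 1) :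
    (∑ i, ∑ j, (B i j - (Q * C) i j) ^ 2) - (∑ i, ∑ j, (B i j - (W * C) i j) ^ 2)
      = ∑ i, ∑ j, ((W * hH.sqrt) i j - (Q * hH.sqrt) i j) ^ 2 := by
  set s := hH.sqrt with hs_def
  have hss : s * s = H := psd_sqrt_mul_self hH
  have hsT : sᵀ = s := by
    exact psd_sqrt_transpose hH
  have hHT : Hᵀ = H := by
    have h := hH.1.eq
    rwa [conjTranspose_eq_transpose_of_trivial] at h
  have hss' : ∀ (X : Matrix (Fin n) (Fin m) ℝ), s * (s * X) = H * X := by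
    intro X; rw [← Matrix.mul_assoc, hss]
  simp only [← Matrix.sub_apply]
  rw [frob_trace, frob_trace, frob_trace]
  simp only [Matrix.transpose_sub, Matrix.transpose_mul, Matrix.sub_mul, Matrix.mul_sub,
    Matrix.trace_sub]
  have cyc : ∀ (X : Matrix (Fin m) (Fin n) ℝ),
      Xᵀ * X = 1 → trace (Cᵀ * Xᵀ * (X * C)) = trace (Cᵀ * C) := by
    intro X hX
    rw [Matrix.mul_assoc, ← Matrix.mul_assoc Xᵀ, hX, Matrix.one_mul]
  have hQC := cyc Q hQ
  have hWC := cyc W hW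
  have cyc2 : ∀ (X : Matrix (Fin m) (Fin n) ℝ),
      Xᵀ * X = 1 → trace (sᵀ * Xᵀ * (X * s)) = trace H := by
    intro X hX
    rw [Matrix.mul_assoc, ← Matrix.mul_assoc Xᵀ, hX, Matrix.one_mul, hsT, hss]
  have hQs := cyc2 Q hQ
  have hWs := cyc2 W hW
  have hBX : ∀ (X : Matrix (Fin m) (Fin n) ℝ),
      trace (Cᵀ * Xᵀ * B) = trace (W * H * Xᵀ) := by
    intro X
    rw [Matrix.trace_mul_comm (Cᵀ * Xᵀ) B, ← Matrix.mul_assoc, hpolar]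
  have hXB : ∀ (X : Matrix (Fin m) (Fin n) ℝ),
      trace (Bᵀ * (X * C)) = trace (W * H * Xᵀ) := by
    intro X
    rw [← Matrix.trace_transpose (Bᵀ * (X * C))]
    simp only [Matrix.transpose_mul, Matrix.transpose_transpose]
    exact hBX X
  have hWB : trace (W * H * Wᵀ) = trace H := by
    rw [Matrix.trace_mul_comm (W * H) Wᵀ, ← Matrix.mul_assoc, hW, Matrix.one_mul]
  have hWQ : trace (sᵀ * Wᵀ * (Q * s)) = trace (W * H * Qᵀ) := by
    rw [hsT, Matrix.trace_mul_comm (s * Wᵀ) (Q * s)]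
    have e : Q * s * (s * Wᵀ) = Q * (H * Wᵀ) := by
      simp only [Matrix.mul_assoc, hss']
    rw [e, ← Matrix.trace_transpose (Q * (H * Wᵀ))]
    simp only [Matrix.transpose_mul, Matrix.transpose_transpose, hHT]
  have hQW : trace (sᵀ * Qᵀ * (W * s)) = trace (W * H * Qᵀ) := by
    rw [hsT, Matrix.trace_mul_comm (s * Qᵀ) (W * s)]
    have e : W * s * (s * Qᵀ) = W * H * Qᵀ := by
      simp only [Matrix.mul_assoc, hss']
    rw [e]
  rw [hQC, hWC, hQs, hWs, hBX Q, hBX W, hXB Q, hXB W, hWQ, hQW, hWB]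
  ring
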